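/- With the notation above, if P gives positive measure to every cylinder, then h is strictly increasing on the complement of the countable exceptional set Q consisting of sequences that eventually (to the left) equal constantly K or constantly 1: if x < y in lexicographic order and x is not in Q (or y is not in Q), then h(x) < h(y). -/

import Mathlib

open MeasureTheory

/-! One-sided pasts are elements of `ℕ → Fin (K+1)`, where index `n` represents
position `-n` (so index `0` is position `0`).  The alphabet `{1, …, 𝒦}` with
`𝒦 = K + 1` is modelled by `Fin (K+1)`, the symbol `j` corresponding to `j - 1`. -/

/-- Strict lexicographic order reading positions `0, -1, -2, …`. -/
def lexLt {K : ℕ} (x y : ℕ → Fin (K+1)) : Prop :=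
  ∃ m, (∀ i, i < m → x i = y i) ∧ x m < y m

/-- Lexicographic order. -/
def lexLe {K : ℕ} (x y : ℕ → Fin (K+1)) : Prop := x = y ∨ lexLt x y

/-- `J(x) = {y : y ≤ x}` in the lexicographic order. -/
def lowerSet {K : ℕ} (x : ℕ → Fin (K+1)) : Set (ℕ → Fin (K+1)) := {y | lexLe y x}

/-- The map `h(x) = P(J(x))`. -/
noncomputable def hmap {K : ℕ} (P : Measure (ℕ → Fin (K+1))) (x : ℕ → Fin (K+1)) : ℝ :=
  (P (lowerSet x)).toReal

/-- `P` has no atoms. -/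
def Atomless {K : ℕ} (P : Measure (ℕ → Fin (K+1))) : Prop := ∀ x, P {x} = 0

/-- `P` gives positive mass to every cylinder. -/
def PosCylinders {K : ℕ} (P : Measure (ℕ → Fin (K+1))) : Prop :=
  ∀ (k : ℕ) (w : ℕ → Fin (K+1)), 0 < P {z | ∀ i, i ≤ k → z i = w i}

/-- The countable exceptional set `𝒬`: sequences whose tail (to the left) is
eventually constantly the largest symbol `𝒦` or constantly the smallest symbol `1`. -/
def exceptional (K : ℕ) : Set (ℕ → Fin (K+1)) :=
  {x | (∃ m, ∀ n, m ≤ n → x n = Fin.last K) ∨ (∃ m, ∀ n, m ≤ n → x n = 0)}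

/-- The shift dropping the coordinate at position `0`. -/
def shiftP {K : ℕ} (x : ℕ → Fin (K+1)) : ℕ → Fin (K+1) := x ∘ Nat.succ

/-- The sequence `t_{-∞}^{-1} a` : symbol `a` at position `0` preceded by infinitely many `t`'s. -/
def withTail {K : ℕ} (t a : Fin (K+1)) : ℕ → Fin (K+1) :=
  fun n => if n = 0 then a else t

/-- The sequence `t_{-∞}^{-(k+2)} a z_{-k}^0` : the word `z` on positions `-k, …, 0`
(`z i` being the symbol at position `-i` for `i ≤ k`), preceded by `a`, preceded by
infinitely many `t`'s. -/
def withSuffix {K : ℕ} (t a : Fin (K+1)) (k : ℕ) (z : ℕ → Fin (K+1)) : ℕ → Fin (K+1) :=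
  fun n => if n ≤ k then z n else if n = k + 1 then a else t

/-- Prepending a symbol at position `0`: the sequence `x_{-∞}^{-1} a`. -/
def consP {K : ℕ} (a : Fin (K+1)) (x : ℕ → Fin (K+1)) : ℕ → Fin (K+1) :=
  fun n => if n = 0 then a else x (n - 1)

/-- `p` is a (measurable, normalized) family of transition probabilities. -/
def IsTransFamily {K : ℕ} (p : Fin (K+1) → (ℕ → Fin (K+1)) → ℝ) : Prop :=
  (∀ a, Measurable (p a)) ∧ (∀ a x, 0 ≤ p a x) ∧ (∀ x, ∑ a, p a x = 1)

/-- Non-nullness: the infimum of the transition probabilities is positive. -/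
def NonNull {K : ℕ} (p : Fin (K+1) → (ℕ → Fin (K+1)) → ℝ) : Prop :=
  ∃ ε > (0:ℝ), ∀ a x, ε ≤ p a x

/-- `β` is a continuity rate for `p` : pasts agreeing on the `k` most recent symbols
give transition probabilities within `β k`. -/
def ContRate {K : ℕ} (p : Fin (K+1) → (ℕ → Fin (K+1)) → ℝ) (β : ℕ → ℝ) : Prop :=
  ∀ k a (x y : ℕ → Fin (K+1)), (∀ i, i < k → x i = y i) → |p a x - p a y| ≤ β k

/-- The (one-sided) stationary measure `P` is compatible with the family `p`. -/
def Compatible {K : ℕ} (p : Fin (K+1) → (ℕ → Fin (K+1)) → ℝ)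
    (P : Measure (ℕ → Fin (K+1))) : Prop :=
  ∀ f : (ℕ → Fin (K+1)) → ℝ, Continuous f →
    ∫ z, f z ∂P = ∫ x, (∑ a, p a x * f (consP a x)) ∂(P.map shiftP)

/-- The endpoints `η_0 = 0 < η_1 < … < η_𝒦 = 1` of the monotonicity intervals,
`η_j = h(𝒦_{-∞}^{-1} j)` for `1 ≤ j ≤ 𝒦 - 1` (here `𝒦 = K + 1`). -/
noncomputable def eta {K : ℕ} (P : Measure (ℕ → Fin (K+1))) : ℕ → ℝ :=
  fun j => if h : 0 < j ∧ j < K + 1 then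
      hmap P (withTail (Fin.last K) ⟨j - 1, by omega⟩)
    else if j = 0 then 0 else 1

section Aux

variable {K : ℕ}

lemma lexLt_trans {x y z : ℕ → Fin (K+1)} (h1 : lexLt x y) (h2 : lexLt y z) :
    lexLt x z := by
  obtain ⟨m1, ha1, hb1⟩ := h1
  obtain ⟨m2, ha2, hb2⟩ := h2
  rcases lt_trichotomy m1 m2 with h | h | h
  · exact ⟨m1, fun i hi => (ha1 i hi).trans (ha2 i (hi.trans h)),
      by rw [← ha2 m1 h]; exact hb1⟩
  · exact ⟨m1, fun i hi => (ha1 i hi).trans (ha2 i (h ▸ hi)),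
      lt_trans hb1 (h ▸ hb2)⟩
  · exact ⟨m2, fun i hi => (ha1 i (hi.trans h)).trans (ha2 i hi),
      by rw [ha1 m2 h]; exact hb2⟩

lemma lexLt_asymm {x y : ℕ → Fin (K+1)} (h : lexLt x y) : ¬ lexLe y x := by
  rintro (rfl | ⟨m2, ha2, hb2⟩)
  · obtain ⟨m, _, hb⟩ := h
    exact lt_irrefl _ hb
  · obtain ⟨m1, ha1, hb1⟩ := h
    rcases lt_trichotomy m1 m2 with hc | hc | hc
    · exact absurd (ha2 m1 hc).symm (ne_of_lt hb1)
    · subst hc; exact absurd hb2 (not_lt_of_gt hb1)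
    · exact absurd (ha1 m2 hc) (ne_of_lt hb2).symm

lemma measurableSet_eval_eq (i : ℕ) (c : Fin (K+1)) :
    MeasurableSet {z : ℕ → Fin (K+1) | z i = c} := by
  exact measurable_pi_apply (X := fun _ : ℕ => Fin (K+1)) i (measurableSet_singleton c)

lemma measurableSet_eval_lt (i : ℕ) (c : Fin (K+1)) :
    MeasurableSet {z : ℕ → Fin (K+1) | z i < c} := by
  have : {z : ℕ → Fin (K+1) | z i < c} = ⋃ b ∈ {b : Fin (K+1) | b < c},
      {z : ℕ → Fin (K+1) | z i = b} := by
    ext z; simp [eq_comm]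
  rw [this]
  exact MeasurableSet.biUnion (Set.to_countable _)
    (fun b _ => measurableSet_eval_eq i b)

lemma measurableSet_cylinder (n : ℕ) (w : ℕ → Fin (K+1)) :
    MeasurableSet {z : ℕ → Fin (K+1) | ∀ i, i ≤ n → z i = w i} := by
  have : {z : ℕ → Fin (K+1) | ∀ i, i ≤ n → z i = w i} =
      ⋂ i, ⋂ _ : i ≤ n, {z : ℕ → Fin (K+1) | z i = w i} := by
    ext z; simp
  rw [this]
  exact MeasurableSet.iInter fun i => MeasurableSet.iInter fun _ =>
    measurableSet_eval_eq i (w i)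

lemma measurableSet_lowerSet (x : ℕ → Fin (K+1)) : MeasurableSet (lowerSet x) := by
  have : lowerSet x =
      (⋂ n, {z : ℕ → Fin (K+1) | z n = x n}) ∪
      ⋃ m, ((⋂ i, ⋂ _ : i < m, {z : ℕ → Fin (K+1) | z i = x i}) ∩
        {z : ℕ → Fin (K+1) | z m < x m}) := by
    ext z
    simp only [Set.mem_union, Set.mem_iInter, Set.mem_iUnion, Set.mem_inter_iff,
      Set.mem_setOf_eq]
    constructor
    · rintro (rfl | ⟨m, ha, hb⟩)
      · exact Or.inl fun n => rfl
      · exact Or.inr ⟨m, fun i hi => ha i hi, hb⟩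
    · rintro (h | ⟨m, ha, hb⟩)
      · exact Or.inl (funext h)
      · exact Or.inr ⟨m, ha, hb⟩
  rw [this]
  exact MeasurableSet.union (MeasurableSet.iInter fun n =>
    measurableSet_eval_eq n (x n))
    (MeasurableSet.iUnion fun m => MeasurableSet.inter
      (MeasurableSet.iInter fun i => MeasurableSet.iInter fun _ =>
        measurableSet_eval_eq i (x i))
      (measurableSet_eval_lt m (x m)))

end Aux

/-- If `P` gives positive measure to every cylinder, then `h` is
strictly increasing outside the exceptional set `𝒬`: if `x < y` lexicographically and
`x ∉ 𝒬` or `y ∉ 𝒬`, then `h(x) < h(y)`. -/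
theorem hmap_strictMono (K : ℕ) (P : Measure (ℕ → Fin (K+1))) [IsProbabilityMeasure P]
    (hP : PosCylinders P) :
    ∀ x y : ℕ → Fin (K+1), lexLt x y →
      (x ∉ exceptional K ∨ y ∉ exceptional K) → hmap P x < hmap P y := by
  intro x y hxy hQ
  obtain ⟨m, hagree, hlt⟩ := hxy
  -- In both cases we produce a positive-measure cylinder C inside lowerSet y,
  -- disjoint from lowerSet x.
  have key : ∃ C : Set (ℕ → Fin (K+1)), MeasurableSet C ∧ 0 < P C ∧
      C ⊆ lowerSet y ∧ Disjoint (lowerSet x) C := by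
    rcases hQ with hx | hy
    · -- x is not eventually the largest symbol
      have hxK : ∀ m0 : ℕ, ∃ n, m0 ≤ n ∧ x n ≠ Fin.last K := by
        intro m0
        by_contra h
        push_neg at h
        exact hx (Or.inl ⟨m0, fun n hn => by
          by_contra h'
          exact absurd (h n) (by simp [hn, h'])⟩)
      obtain ⟨n, hn, hne⟩ := hxK (m + 1)
      have hmn : m < n := hn
      have hxnK : (x n : ℕ) < K := by
        have := (x n).isLt
        have : (x n : ℕ) ≠ K := fun h => hne (Fin.ext h)
        omega
      set a : Fin (K+1) := ⟨(x n : ℕ) + 1, by omega⟩ with ha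
      set w : ℕ → Fin (K+1) := Function.update x n a with hw
      refine ⟨{z | ∀ i, i ≤ n → z i = w i}, ?_, hP n w, ?_, ?_⟩
      · exact measurableSet_cylinder n w
      · intro z hz
        refine Or.inr ⟨m, fun i hi => ?_, ?_⟩
        · rw [hz i (le_of_lt (hi.trans hmn)), hw, Function.update_of_ne (by omega)]
          exact hagree i hi
        · rw [hz m (le_of_lt hmn), hw, Function.update_of_ne (by omega)]
          exact hlt
      · rw [Set.disjoint_right]
        intro z hz
        have hzx : lexLt x z := by
          refine ⟨n, fun i hi => ?_, ?_⟩
          · rw [hz i (le_of_lt hi), hw, Function.update_of_ne (by omega)]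
          · rw [hz n le_rfl, hw, Function.update_self]
            exact Fin.lt_def.mpr (by simp [ha])
        exact lexLt_asymm hzx
    · -- y is not eventually the smallest symbol
      have hy0 : ∀ m0 : ℕ, ∃ n, m0 ≤ n ∧ y n ≠ 0 := by
        intro m0
        by_contra h
        push_neg at h
        exact hy (Or.inr ⟨m0, fun n hn => by
          by_contra h'
          exact absurd (h n) (by simp [hn, h'])⟩)
      obtain ⟨n, hn, hne⟩ := hy0 (m + 1)
      have hmn : m < n := hn
      have hyn0 : 0 < (y n : ℕ) := by
        rcases Nat.eq_zero_or_pos (y n : ℕ) with h | h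
        · exact absurd (Fin.ext h) hne
        · exact h
      set b : Fin (K+1) := ⟨(y n : ℕ) - 1, by omega⟩ with hb
      set w : ℕ → Fin (K+1) := Function.update y n b with hw
      refine ⟨{z | ∀ i, i ≤ n → z i = w i}, ?_, hP n w, ?_, ?_⟩
      · exact measurableSet_cylinder n w
      · intro z hz
        refine Or.inr ⟨n, fun i hi => ?_, ?_⟩
        · rw [hz i (le_of_lt hi), hw, Function.update_of_ne (by omega)]
        · rw [hz n le_rfl, hw, Function.update_self]
          exact Fin.lt_def.mpr (by show (y n : ℕ) - 1 < (y n : ℕ); omega)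
      · rw [Set.disjoint_right]
        intro z hz
        have hzx : lexLt x z := by
          refine ⟨m, fun i hi => ?_, ?_⟩
          · rw [hz i (le_of_lt (hi.trans hmn)), hw, Function.update_of_ne (by omega)]
            exact (hagree i hi).symm ▸ rfl
          · rw [hz m (le_of_lt hmn), hw, Function.update_of_ne (by omega)]
            exact hlt
        exact lexLt_asymm hzx
  obtain ⟨C, hCmeas, hCpos, hCsub, hdisj⟩ := key
  have hAsub : lowerSet x ⊆ lowerSet y := by
    rintro z (rfl | hz)
    · exact Or.inr ⟨m, hagree, hlt⟩
    · exact Or.inr (lexLt_trans hz ⟨m, hagree, hlt⟩)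
  have hlt' : P (lowerSet x) < P (lowerSet y) := by
    calc P (lowerSet x) < P (lowerSet x) + P C :=
          ENNReal.lt_add_right (measure_ne_top P _) (ne_of_gt hCpos)
      _ = P (lowerSet x ∪ C) := (measure_union hdisj hCmeas).symm
      _ ≤ P (lowerSet y) := measure_mono (Set.union_subset hAsub hCsub)
  exact (ENNReal.toReal_lt_toReal (measure_ne_top P _) (measure_ne_top P _)).mpr hlt'
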